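/- Let G be a strongly connected digraph with n ≥ 4 vertices and m arcs, and let q(G) be the spectral radius of the signless Laplacian Q(G) = D(G) + A(G). Then q(G) ≤ max{Δ⁺(G), (m−n+1)/2} + 2. -/

import Mathlib

open Matrix Finset ENNReal

/-- The outdegree of a vertex in a digraph given by its arc relation. -/
def outDeg {V : Type*} [Fintype V] (E : V → V → Prop) [DecidableRel E] (u : V) : ℕ :=
  (Finset.univ.filter (fun v => E u v)).card

/-- The maximum outdegree. -/
def maxOutDeg {V : Type*} [Fintype V] (E : V → V → Prop) [DecidableRel E] : ℕ :=
  Finset.univ.sup (outDeg E)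

/-- A simple digraph has no loops. -/
def IsSimpleDigraph {V : Type*} (E : V → V → Prop) : Prop := ∀ v, ¬ E v v

/-- Strong connectivity: every vertex reaches every other by a directed walk. -/
def StronglyConnected {V : Type*} (E : V → V → Prop) : Prop :=
  ∀ u v, Relation.ReflTransGen E u v

/-- The A_α matrix  α D + (1-α) A  of a digraph, over ℂ. -/
noncomputable def Aalpha {V : Type*} [Fintype V] [DecidableEq V] (α : ℝ)
    (E : V → V → Prop) [DecidableRel E] : Matrix V V ℂ :=
  (α : ℂ) • Matrix.diagonal (fun u => (outDeg E u : ℂ)) +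
    ((1 - α : ℝ) : ℂ) • Matrix.of (fun u v => if E u v then (1 : ℂ) else 0)

/-- The A_α spectral radius of a digraph. -/
noncomputable def lambdaAlpha {V : Type*} [Fintype V] [DecidableEq V] (α : ℝ)
    (E : V → V → Prop) [DecidableRel E] : ℝ≥0∞ :=
  spectralRadius ℂ (Aalpha α E)

/-- The signless Laplacian matrix D + A of a digraph, over ℂ. -/
noncomputable def signlessLaplacian {V : Type*} [Fintype V] [DecidableEq V]
    (E : V → V → Prop) [DecidableRel E] : Matrix V V ℂ :=
  Matrix.diagonal (fun u => (outDeg E u : ℂ)) +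
    Matrix.of (fun u v => if E u v then (1 : ℂ) else 0)

/-- The signless Laplacian spectral radius of a digraph. -/
noncomputable def qSpec {V : Type*} [Fintype V] [DecidableEq V]
    (E : V → V → Prop) [DecidableRel E] : ℝ≥0∞ :=
  spectralRadius ℂ (signlessLaplacian E)

lemma arith_key (d D C S : ℝ) (hd1 : 1 ≤ d) (hdD : d ≤ D)
    (hSC : S ≤ C) (hSdD : S ≤ d * D) :
    d ^ 2 + S ≤ (max D (C / 2) + 2) * d := by
  rcases le_or_gt d 2 with h | h
  · have h1 : D ≤ max D (C/2) := le_max_left _ _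
    nlinarith [mul_nonneg (sub_nonneg.2 h1) (by linarith : (0:ℝ) ≤ d)]
  · rcases le_or_gt C (2 * d) with h2 | h2
    · have h1 : D ≤ max D (C/2) := le_max_left _ _
      nlinarith [mul_nonneg (sub_nonneg.2 h1) (by linarith : (0:ℝ) ≤ d),
        mul_nonneg (sub_nonneg.2 hdD) (by linarith : (0:ℝ) ≤ d)]
    · have h1 : C/2 ≤ max D (C/2) := le_max_right _ _
      nlinarith [mul_nonneg (sub_nonneg.2 h1) (by linarith : (0:ℝ) ≤ d),
        mul_nonneg (by linarith : (0:ℝ) ≤ d - 2) (by linarith : (0:ℝ) ≤ C - 2*d)]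

theorem stmt_5 {V : Type*} [Fintype V] [DecidableEq V]
    (E : V → V → Prop) [DecidableRel E]
    (hsimple : IsSimpleDigraph E) (hsc : StronglyConnected E)
    (n m : ℕ) (hn : n = Fintype.card V) (hn4 : 4 ≤ n)
    (hm : m = ∑ v, outDeg E v) :
    qSpec E ≤ ENNReal.ofReal
      (max (maxOutDeg E : ℝ) (((m : ℝ) - n + 1) / 2) + 2) := by
  classical
  have hcV : 4 ≤ Fintype.card V := hn ▸ hn4
  have hVne : Nonempty V := Fintype.card_pos_iff.mp (by omega)
  set d : V → ℕ := outDeg E with hdDef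
  -- every outdegree is at least 1
  have hd1 : ∀ v, 1 ≤ d v := by
    intro v
    obtain ⟨w, hw⟩ := Fintype.exists_ne_of_one_lt_card (by omega) v
    rcases (hsc v w).cases_head with h | ⟨c, hc, -⟩
    · exact absurd h.symm hw
    · have hcmem : c ∈ univ.filter (fun z => E v z) := by simp [hc]
      have := Finset.card_pos.mpr ⟨c, hcmem⟩
      simpa [hdDef, outDeg] using this
  have hdD : ∀ v, d v ≤ maxOutDeg E := fun v => Finset.le_sup (mem_univ v)
  -- neighborhood degree sums
  have hS : ∀ v0 : V, (∑ z ∈ univ.filter (fun z => E v0 z), d z) + (n - 1) ≤ m := by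
    intro v0
    have hsplit : (∑ z ∈ univ.filter (fun z => E v0 z), d z)
        + (∑ z ∈ univ.filter (fun z => ¬ E v0 z), d z) = m := by
      rw [hm]; exact Finset.sum_filter_add_sum_filter_not _ _ _
    set s := univ.filter (fun z => ¬ E v0 z) with hs
    have hv0s : v0 ∈ s := by simp [hs, hsimple v0]
    have hcards : (univ.filter (fun z => E v0 z)).card + s.card = n := by
      rw [hn]; simpa [hs] using
        Finset.card_filter_add_card_filter_not (s := (univ : Finset V))
          (p := fun z => E v0 z)
    have hdc : d v0 = (univ.filter (fun z => E v0 z)).card := rfl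
    have herase : (s.erase v0).card + 1 = s.card := Finset.card_erase_add_one hv0s
    have hT : d v0 + (s.erase v0).card ≤ ∑ z ∈ s, d z := by
      rw [← Finset.add_sum_erase _ _ hv0s]
      have h1 : (s.erase v0).card ≤ ∑ z ∈ s.erase v0, d z := by
        calc (s.erase v0).card = ∑ _z ∈ s.erase v0, 1 := by simp
        _ ≤ _ := Finset.sum_le_sum fun z _ => hd1 z
      omega
    omega
  have hSdD : ∀ v0 : V, (∑ z ∈ univ.filter (fun z => E v0 z), d z) ≤ d v0 * maxOutDeg E := by
    intro v0
    calc (∑ z ∈ univ.filter (fun z => E v0 z), d z)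
        ≤ (univ.filter (fun z => E v0 z)).card * maxOutDeg E := by
          rw [← smul_eq_mul]
          exact Finset.sum_le_card_nsmul _ _ _ fun z _ => hdD z
      _ = d v0 * maxOutDeg E := by rfl
  -- the bound B
  set B : ℝ := max (maxOutDeg E : ℝ) (((m : ℝ) - n + 1) / 2) + 2 with hB
  have hB0 : 0 ≤ B := by
    have h0 : (0:ℝ) ≤ (maxOutDeg E : ℝ) := Nat.cast_nonneg _
    have h1 := le_max_left (maxOutDeg E : ℝ) (((m : ℝ) - n + 1) / 2)
    rw [hB]; linarith
  have hkey : ∀ v0 : V,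
      (d v0 : ℝ)^2 + (∑ z ∈ univ.filter (fun z => E v0 z), (d z : ℝ)) ≤ B * d v0 := by
    intro v0
    have h1 : (1:ℝ) ≤ d v0 := by exact_mod_cast hd1 v0
    have h2 : (d v0 : ℝ) ≤ (maxOutDeg E : ℝ) := by exact_mod_cast hdD v0
    have h3 : (∑ z ∈ univ.filter (fun z => E v0 z), (d z : ℝ)) ≤ (m : ℝ) - n + 1 := by
      have h := (Nat.cast_le (α := ℝ)).mpr (hS v0)
      push_cast [Nat.cast_sub (show 1 ≤ n by omega)] at h
      linarith
    have h4 : (∑ z ∈ univ.filter (fun z => E v0 z), (d z : ℝ))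
        ≤ (d v0 : ℝ) * (maxOutDeg E : ℝ) := by exact_mod_cast hSdD v0
    exact arith_key _ _ _ _ h1 h2 h3 h4
  -- spectral part
  show spectralRadius ℂ (signlessLaplacian E) ≤ ENNReal.ofReal B
  rw [spectralRadius]
  refine iSup₂_le fun μ hμ => ?_
  rw [spectrum.mem_iff] at hμ
  have hdet : (algebraMap ℂ (Matrix V V ℂ) μ - signlessLaplacian E).det = 0 := by
    by_contra h
    exact hμ ((Matrix.isUnit_iff_isUnit_det _).mpr (isUnit_iff_ne_zero.mpr h))
  obtain ⟨x, hx0, hxe⟩ := Matrix.exists_mulVec_eq_zero_iff.mpr hdet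
  have hQx : ∀ v, ((signlessLaplacian E).mulVec x) v = μ * x v := by
    intro v
    have h0 := congrFun hxe v
    rw [Matrix.sub_mulVec, Algebra.algebraMap_eq_smul_one, Matrix.smul_mulVec,
      Matrix.one_mulVec] at h0
    have h1 : μ • x v - ((signlessLaplacian E).mulVec x) v = 0 := h0
    have h2 := sub_eq_zero.mp h1
    simpa [smul_eq_mul] using h2.symm
  -- argmax of ‖x v‖ / d v
  obtain ⟨v0, -, hv0⟩ := Finset.exists_max_image (univ : Finset V)
    (fun v => ‖x v‖ / (d v : ℝ)) univ_nonempty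
  set β : ℝ := ‖x v0‖ / (d v0 : ℝ) with hβdef
  have hdpos : ∀ v, (0:ℝ) < (d v : ℝ) := fun v => by
    exact_mod_cast Nat.lt_of_lt_of_le Nat.zero_lt_one (hd1 v)
  have hβ : ∀ v, ‖x v‖ ≤ β * d v := by
    intro v
    have h := hv0 v (mem_univ v)
    calc ‖x v‖ = (‖x v‖ / (d v : ℝ)) * d v :=
          (div_mul_cancel₀ _ (ne_of_gt (hdpos v))).symm
      _ ≤ β * d v := mul_le_mul_of_nonneg_right h (le_of_lt (hdpos v))
  have hβpos : 0 < β := by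
    obtain ⟨w, hw⟩ := Function.ne_iff.mp hx0
    have h1 : 0 < ‖x w‖ / (d w : ℝ) := div_pos (norm_pos_iff.mpr hw) (hdpos w)
    exact lt_of_lt_of_le h1 (hv0 w (mem_univ w))
  have hxv0 : ‖x v0‖ = β * d v0 := by
    rw [hβdef]; exact (div_mul_cancel₀ _ (ne_of_gt (hdpos v0))).symm
  have hxv0pos : 0 < ‖x v0‖ := by
    rw [hxv0]; exact mul_pos hβpos (hdpos v0)
  -- entry values
  set r : V → ℝ := fun v => (if v0 = v then (d v0 : ℝ) else 0) + (if E v0 v then 1 else 0)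
    with hrdef
  have hr0 : ∀ v, 0 ≤ r v := by
    intro v; rw [hrdef]; dsimp only; split_ifs <;> positivity
  have hQr : ∀ v, signlessLaplacian E v0 v = ((r v : ℝ) : ℂ) := by
    intro v
    have hrv : r v = (if v0 = v then (d v0 : ℝ) else 0) + (if E v0 v then 1 else 0) := by
      rw [hrdef]
    rw [hrv]
    show (Matrix.diagonal (fun u => (d u : ℂ)) + Matrix.of (fun u v => if E u v then (1:ℂ) else 0)) v0 v = _
    rw [Matrix.add_apply, Matrix.diagonal_apply, Matrix.of_apply]
    by_cases h1 : v0 = v <;> by_cases h2 : E v0 v <;>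
      simp [h1, h2, hsimple v]
  -- the main chain
  have hchain : ‖μ‖ * ‖x v0‖ ≤ B * ‖x v0‖ := by
    have e1 : ‖μ‖ * ‖x v0‖ = ‖((signlessLaplacian E).mulVec x) v0‖ := by
      rw [hQx v0, norm_mul]
    have e2 : ((signlessLaplacian E).mulVec x) v0 = ∑ v, signlessLaplacian E v0 v * x v := by
      simp [Matrix.mulVec, dotProduct]
    have hsum : (∑ v, r v * (β * (d v : ℝ)))
        = β * ((d v0 : ℝ)^2 + ∑ z ∈ univ.filter (fun z => E v0 z), (d z : ℝ)) := by
      rw [hrdef]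
      have h1 : ∀ v : V, ((if v0 = v then (d v0 : ℝ) else 0) + (if E v0 v then 1 else 0))
            * (β * (d v : ℝ))
          = (if v0 = v then (d v0 : ℝ) * (β * d v0) else 0)
            + (if E v0 v then β * (d v : ℝ) else 0) := by
        intro v
        by_cases hv : v0 = v
        · subst hv
          by_cases h2 : E v0 v0 <;> simp [h2] <;> ring
        · by_cases h2 : E v0 v <;> simp [hv, h2] <;> ring
      rw [Finset.sum_congr rfl fun v _ => h1 v, Finset.sum_add_distrib,
        Finset.sum_ite_eq, ← Finset.sum_filter, ← Finset.mul_sum]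
      simp only [mem_univ, if_true]
      ring
    calc ‖μ‖ * ‖x v0‖ = ‖∑ v, signlessLaplacian E v0 v * x v‖ := by rw [e1, e2]
      _ ≤ ∑ v, ‖signlessLaplacian E v0 v * x v‖ := norm_sum_le _ _
      _ = ∑ v, r v * ‖x v‖ := by
          refine Finset.sum_congr rfl fun v _ => ?_
          rw [hQr v, norm_mul, Complex.norm_real, Real.norm_eq_abs, abs_of_nonneg (hr0 v)]
      _ ≤ ∑ v, r v * (β * (d v : ℝ)) :=
          Finset.sum_le_sum fun v _ => mul_le_mul_of_nonneg_left (hβ v) (hr0 v)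
      _ = β * ((d v0 : ℝ)^2 + ∑ z ∈ univ.filter (fun z => E v0 z), (d z : ℝ)) := hsum
      _ ≤ β * (B * d v0) := mul_le_mul_of_nonneg_left (hkey v0) (le_of_lt hβpos)
      _ = B * ‖x v0‖ := by rw [hxv0]; ring
  have hfin : ‖μ‖ ≤ B := le_of_mul_le_mul_right (by linarith [hchain]) hxv0pos
  calc (‖μ‖₊ : ℝ≥0∞) = ENNReal.ofReal ‖μ‖ := (ofReal_norm μ).symm
    _ ≤ ENNReal.ofReal B := ENNReal.ofReal_le_ofReal hfin
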